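/- For all integers m, p, q, r ≥ 2 with 1/p + 1/q + 1/r > 1, one has 2 + m + 1/m ≠ -2 + p + q + r + 1/p + 1/q + 1/r in ℚ. -/

import Mathlib

lemma key_aux (m n : ℕ) (hm : 2 ≤ m) (e : ℚ) (h0 : 0 < e) (h1 : e < 1)
    (hne : e ≠ 1 / (n : ℚ)) : (m : ℚ) + 1 / m ≠ (n : ℚ) + e := by
  intro h
  have hmQ : (2:ℚ) ≤ m := by exact_mod_cast hm
  have hm0 : (0:ℚ) < m := by linarith
  have hinv : 1 / (m:ℚ) ≤ 1/2 := by
    rw [div_le_div_iff₀ hm0 (by norm_num)]; linarith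
  have hinv0 : 0 < 1 / (m:ℚ) := by positivity
  have hz : ((m:ℤ) - (n:ℤ) : ℚ) = e - 1/m := by push_cast; linarith
  have hb1 : (-1:ℚ) < ((m:ℤ) - (n:ℤ) : ℚ) := by rw [hz]; linarith
  have hb2 : ((m:ℤ) - (n:ℤ) : ℚ) < 1 := by rw [hz]; linarith
  have hb1' : (-1:ℤ) < (m:ℤ) - n := by exact_mod_cast hb1
  have hb2' : ((m:ℤ) - n : ℤ) < 1 := by exact_mod_cast hb2
  have : m = n := by omega
  subst this
  exact hne (by linarith)

lemma aux2 (m q r : ℕ) (hm : 2 ≤ m) (hq : 2 ≤ q) (hr : 2 ≤ r)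
    (hqr : 1 < 1/2 + 1 / (q:ℚ) + 1 / r) :
    2 + (m : ℚ) + 1 / m ≠ (q:ℚ) + r + 1 / q + 1 / r + 1/2 := by
  have hrQ : (2:ℚ) ≤ r := by exact_mod_cast hr
  have hqQ : (2:ℚ) ≤ q := by exact_mod_cast hq
  have hr0 : (0:ℚ) < r := by linarith
  have hq0 : (0:ℚ) < q := by linarith
  rcases eq_or_lt_of_le hq with h2 | h3
  · -- q = 2
    have : q = 2 := h2.symm
    subst this
    intro h
    refine key_aux m (r+1) hm (1/r) (by positivity) ?_ ?_ ?_
    · rw [div_lt_one hr0]; linarith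
    · intro h'
      rw [div_eq_div_iff hr0.ne' (by push_cast; positivity)] at h'
      push_cast at h'; linarith
    · push_cast; push_cast at h; linarith
  · rcases eq_or_lt_of_le hr with h2r | h3r
    · -- r = 2
      have : r = 2 := h2r.symm
      subst this
      intro h
      refine key_aux m (q+1) hm (1/q) (by positivity) ?_ ?_ ?_
      · rw [div_lt_one hq0]; linarith
      · intro h'
        rw [div_eq_div_iff hq0.ne' (by push_cast; positivity)] at h'
        push_cast at h'; linarith
      · push_cast; push_cast at h; linarith
    · -- q ≥ 3, r ≥ 3, bounded
      have hq3 : 3 ≤ q := h3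
      have hr3 : 3 ≤ r := h3r
      have hq3Q : (3:ℚ) ≤ q := by exact_mod_cast hq3
      have hr3Q : (3:ℚ) ≤ r := by exact_mod_cast hr3
      have hq6 : (q:ℚ) < 6 := by
        by_contra hc; push_neg at hc
        have : 1/(q:ℚ) ≤ 1/6 := by rw [div_le_div_iff₀ hq0 (by norm_num)]; linarith
        have : 1/(r:ℚ) ≤ 1/3 := by rw [div_le_div_iff₀ hr0 (by norm_num)]; linarith
        linarith
      have hr6 : (r:ℚ) < 6 := by
        by_contra hc; push_neg at hc
        have : 1/(r:ℚ) ≤ 1/6 := by rw [div_le_div_iff₀ hr0 (by norm_num)]; linarith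
        have : 1/(q:ℚ) ≤ 1/3 := by rw [div_le_div_iff₀ hq0 (by norm_num)]; linarith
        linarith
      have hq5 : q ≤ 5 := by
        have h6 : q < 6 := by exact_mod_cast hq6
        omega
      have hr5 : r ≤ 5 := by
        have h6 : r < 6 := by exact_mod_cast hr6
        omega
      intro h
      interval_cases q <;> interval_cases r <;> norm_num at h hqr <;>
        [ exact key_aux m 5 hm (1/6) (by norm_num) (by norm_num) (by norm_num) (by push_cast; rw [one_div]; linarith);
          exact key_aux m 6 hm (1/12) (by norm_num) (by norm_num) (by norm_num) (by push_cast; rw [one_div]; linarith);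
          exact key_aux m 7 hm (1/30) (by norm_num) (by norm_num) (by norm_num) (by push_cast; rw [one_div]; linarith);
          exact key_aux m 6 hm (1/12) (by norm_num) (by norm_num) (by norm_num) (by push_cast; rw [one_div]; linarith);
          exact key_aux m 7 hm (1/30) (by norm_num) (by norm_num) (by norm_num) (by push_cast; rw [one_div]; linarith) ]

/-- The invariant `c` distinguishes teardrops from triangular pillows of
positive Euler characteristic: for integers `m, p, q, r ≥ 2` with
`1/p + 1/q + 1/r > 1`, one has `2 + m + 1/m ≠ -2 + p + q + r + 1/p + 1/q + 1/r`
in `ℚ`. -/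
theorem teardrop_ne_spherical_pillow (m p q r : ℕ)
    (hm : 2 ≤ m) (hp : 2 ≤ p) (hq : 2 ≤ q) (hr : 2 ≤ r)
    (hχ : 1 < 1 / (p : ℚ) + 1 / q + 1 / r) :
    2 + (m : ℚ) + 1 / m ≠ -2 + (p : ℚ) + q + r + 1 / p + 1 / q + 1 / r := by
  have hpQ : (2:ℚ) ≤ p := by exact_mod_cast hp
  have hqQ : (2:ℚ) ≤ q := by exact_mod_cast hq
  have hrQ : (2:ℚ) ≤ r := by exact_mod_cast hr
  have hp0 : (0:ℚ) < p := by linarith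
  have hq0 : (0:ℚ) < q := by linarith
  have hr0 : (0:ℚ) < r := by linarith
  have h2 : p = 2 ∨ q = 2 ∨ r = 2 := by
    by_contra hc
    push_neg at hc
    have hp3 : (3:ℚ) ≤ p := by exact_mod_cast (by omega : 3 ≤ p)
    have hq3 : (3:ℚ) ≤ q := by exact_mod_cast (by omega : 3 ≤ q)
    have hr3 : (3:ℚ) ≤ r := by exact_mod_cast (by omega : 3 ≤ r)
    have h1 : 1/(p:ℚ) ≤ 1/3 := by rw [div_le_div_iff₀ hp0 (by norm_num)]; linarith
    have h2 : 1/(q:ℚ) ≤ 1/3 := by rw [div_le_div_iff₀ hq0 (by norm_num)]; linarith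
    have h3 : 1/(r:ℚ) ≤ 1/3 := by rw [div_le_div_iff₀ hr0 (by norm_num)]; linarith
    linarith
  rcases h2 with h2 | h2 | h2
  · subst h2
    intro h
    exact aux2 m q r hm hq hr (by norm_num at hχ ⊢; linarith) (by push_cast at h ⊢; linarith)
  · subst h2
    intro h
    exact aux2 m p r hm hp hr (by norm_num at hχ ⊢; linarith) (by push_cast at h ⊢; linarith)
  · subst h2
    intro h
    exact aux2 m p q hm hp hq (by norm_num at hχ ⊢; linarith) (by push_cast at h ⊢; linarith)
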